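/- For all nonnegative integers u, v, w, t and every γ ∈ ℤ⁴, the polynomial z₁^u·z₂^v·z₃^w·z₄^t·F_γ lies in the ℂ-linear span of the set of polynomials {(z₂z₃ − z₁z₄)^p · F_δ : p ∈ ℕ, δ ∈ ℤ⁴} in ℂ[z₁,z₂,z₃,z₄]. -/

import Mathlib

open MvPolynomial Finset

/-- The hypergeometric Γ-series `F_γ` for the lattice `B = ℤ⟨(1,-1,-1,1)⟩`,
as a polynomial in `ℂ[z₁,z₂,z₃,z₄]`. -/
noncomputable def GammaSeries (γ : Fin 4 → ℤ) : MvPolynomial (Fin 4) ℂ :=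
  ∑ n ∈ Finset.Icc (max (-γ 0) (-γ 3)) (min (γ 1) (γ 2)),
    MvPolynomial.C ((((γ 0 + n).toNat.factorial * (γ 1 - n).toNat.factorial *
        (γ 2 - n).toNat.factorial * (γ 3 + n).toNat.factorial : ℕ) : ℂ))⁻¹ *
      (X 0 ^ (γ 0 + n).toNat * X 1 ^ (γ 1 - n).toNat *
        X 2 ^ (γ 2 - n).toNat * X 3 ^ (γ 3 + n).toNat)

noncomputable def g4 (a b c d : ℤ) : MvPolynomial (Fin 4) ℂ :=
  if 0 ≤ a ∧ 0 ≤ b ∧ 0 ≤ c ∧ 0 ≤ d then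
    C (((a.toNat.factorial * b.toNat.factorial *
        c.toNat.factorial * d.toNat.factorial : ℕ) : ℂ))⁻¹ *
      (X 0 ^ a.toNat * X 1 ^ b.toNat * X 2 ^ c.toNat * X 3 ^ d.toNat)
  else 0

lemma X0_g4 (a b c d : ℤ) :
    X 0 * g4 a b c d = C ((a + 1 : ℤ) : ℂ) * g4 (a + 1) b c d := by
  unfold g4
  by_cases h : 0 ≤ a ∧ 0 ≤ b ∧ 0 ≤ c ∧ 0 ≤ d
  · rw [if_pos h, if_pos (by omega : 0 ≤ a + 1 ∧ 0 ≤ b ∧ 0 ≤ c ∧ 0 ≤ d)]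
    have ht : (a + 1).toNat = a.toNat + 1 := by omega
    have ha : ((a + 1 : ℤ) : ℂ) = ((a.toNat + 1 : ℕ) : ℂ) := by
      have h2 : a = (a.toNat : ℤ) := (Int.toNat_of_nonneg h.1).symm
      rw [h2]; push_cast [Int.toNat_natCast]; ring
    rw [ht, ha]
    have hk : ((a.toNat + 1 : ℕ) : ℂ) ≠ 0 :=
      Nat.cast_ne_zero.mpr (Nat.succ_ne_zero _)
    have hM : (((a.toNat + 1).factorial * b.toNat.factorial * c.toNat.factorial *
          d.toNat.factorial : ℕ) : ℂ) = ((a.toNat + 1 : ℕ) : ℂ) *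
        ((a.toNat.factorial * b.toNat.factorial * c.toNat.factorial *
          d.toNat.factorial : ℕ) : ℂ) := by
      rw [Nat.factorial_succ]; push_cast; ring
    have key : ((a.toNat + 1 : ℕ) : ℂ) *
        ((((a.toNat + 1).factorial * b.toNat.factorial * c.toNat.factorial *
          d.toNat.factorial : ℕ) : ℂ))⁻¹ =
        (((a.toNat.factorial * b.toNat.factorial * c.toNat.factorial *
          d.toNat.factorial : ℕ) : ℂ))⁻¹ := by
      rw [hM, mul_inv, ← mul_assoc, mul_inv_cancel₀ hk, one_mul]
    conv_rhs => rw [← mul_assoc, ← C_mul, key]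
    rw [pow_succ]
    ring
  · rw [if_neg h]
    by_cases h' : 0 ≤ a + 1 ∧ 0 ≤ b ∧ 0 ≤ c ∧ 0 ≤ d
    · rw [if_pos h']
      have : a + 1 = 0 := by omega
      rw [this]
      simp
    · rw [if_neg h']; simp

lemma X1_g4 (a b c d : ℤ) :
    X 1 * g4 a b c d = C ((b + 1 : ℤ) : ℂ) * g4 a (b + 1) c d := by
  unfold g4
  by_cases h : 0 ≤ a ∧ 0 ≤ b ∧ 0 ≤ c ∧ 0 ≤ d
  · rw [if_pos h, if_pos (by omega : 0 ≤ a ∧ 0 ≤ b + 1 ∧ 0 ≤ c ∧ 0 ≤ d)]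
    have ht : (b + 1).toNat = b.toNat + 1 := by omega
    have ha : ((b + 1 : ℤ) : ℂ) = ((b.toNat + 1 : ℕ) : ℂ) := by
      have h2 : b = (b.toNat : ℤ) := (Int.toNat_of_nonneg h.2.1).symm
      rw [h2]; push_cast [Int.toNat_natCast]; ring
    rw [ht, ha]
    have hk : ((b.toNat + 1 : ℕ) : ℂ) ≠ 0 :=
      Nat.cast_ne_zero.mpr (Nat.succ_ne_zero _)
    have hM : ((a.toNat.factorial * (b.toNat + 1).factorial * c.toNat.factorial *
          d.toNat.factorial : ℕ) : ℂ) = ((b.toNat + 1 : ℕ) : ℂ) *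
        ((a.toNat.factorial * b.toNat.factorial * c.toNat.factorial *
          d.toNat.factorial : ℕ) : ℂ) := by
      rw [Nat.factorial_succ]; push_cast; ring
    have key : ((b.toNat + 1 : ℕ) : ℂ) *
        (((a.toNat.factorial * (b.toNat + 1).factorial * c.toNat.factorial *
          d.toNat.factorial : ℕ) : ℂ))⁻¹ =
        (((a.toNat.factorial * b.toNat.factorial * c.toNat.factorial *
          d.toNat.factorial : ℕ) : ℂ))⁻¹ := by
      rw [hM, mul_inv, ← mul_assoc, mul_inv_cancel₀ hk, one_mul]
    conv_rhs => rw [← mul_assoc, ← C_mul, key]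
    rw [pow_succ]
    ring
  · rw [if_neg h]
    by_cases h' : 0 ≤ a ∧ 0 ≤ b + 1 ∧ 0 ≤ c ∧ 0 ≤ d
    · rw [if_pos h']
      have : b + 1 = 0 := by omega
      rw [this]
      simp
    · rw [if_neg h']; simp

lemma X2_g4 (a b c d : ℤ) :
    X 2 * g4 a b c d = C ((c + 1 : ℤ) : ℂ) * g4 a b (c + 1) d := by
  unfold g4
  by_cases h : 0 ≤ a ∧ 0 ≤ b ∧ 0 ≤ c ∧ 0 ≤ d
  · rw [if_pos h, if_pos (by omega : 0 ≤ a ∧ 0 ≤ b ∧ 0 ≤ c + 1 ∧ 0 ≤ d)]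
    have ht : (c + 1).toNat = c.toNat + 1 := by omega
    have ha : ((c + 1 : ℤ) : ℂ) = ((c.toNat + 1 : ℕ) : ℂ) := by
      have h2 : c = (c.toNat : ℤ) := (Int.toNat_of_nonneg h.2.2.1).symm
      rw [h2]; push_cast [Int.toNat_natCast]; ring
    rw [ht, ha]
    have hk : ((c.toNat + 1 : ℕ) : ℂ) ≠ 0 :=
      Nat.cast_ne_zero.mpr (Nat.succ_ne_zero _)
    have hM : ((a.toNat.factorial * b.toNat.factorial * (c.toNat + 1).factorial *
          d.toNat.factorial : ℕ) : ℂ) = ((c.toNat + 1 : ℕ) : ℂ) *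
        ((a.toNat.factorial * b.toNat.factorial * c.toNat.factorial *
          d.toNat.factorial : ℕ) : ℂ) := by
      rw [Nat.factorial_succ]; push_cast; ring
    have key : ((c.toNat + 1 : ℕ) : ℂ) *
        (((a.toNat.factorial * b.toNat.factorial * (c.toNat + 1).factorial *
          d.toNat.factorial : ℕ) : ℂ))⁻¹ =
        (((a.toNat.factorial * b.toNat.factorial * c.toNat.factorial *
          d.toNat.factorial : ℕ) : ℂ))⁻¹ := by
      rw [hM, mul_inv, ← mul_assoc, mul_inv_cancel₀ hk, one_mul]
    conv_rhs => rw [← mul_assoc, ← C_mul, key]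
    rw [pow_succ]
    ring
  · rw [if_neg h]
    by_cases h' : 0 ≤ a ∧ 0 ≤ b ∧ 0 ≤ c + 1 ∧ 0 ≤ d
    · rw [if_pos h']
      have : c + 1 = 0 := by omega
      rw [this]
      simp
    · rw [if_neg h']; simp

lemma X3_g4 (a b c d : ℤ) :
    X 3 * g4 a b c d = C ((d + 1 : ℤ) : ℂ) * g4 a b c (d + 1) := by
  unfold g4
  by_cases h : 0 ≤ a ∧ 0 ≤ b ∧ 0 ≤ c ∧ 0 ≤ d
  · rw [if_pos h, if_pos (by omega : 0 ≤ a ∧ 0 ≤ b ∧ 0 ≤ c ∧ 0 ≤ d + 1)]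
    have ht : (d + 1).toNat = d.toNat + 1 := by omega
    have ha : ((d + 1 : ℤ) : ℂ) = ((d.toNat + 1 : ℕ) : ℂ) := by
      have h2 : d = (d.toNat : ℤ) := (Int.toNat_of_nonneg h.2.2.2).symm
      rw [h2]; push_cast [Int.toNat_natCast]; ring
    rw [ht, ha]
    have hk : ((d.toNat + 1 : ℕ) : ℂ) ≠ 0 :=
      Nat.cast_ne_zero.mpr (Nat.succ_ne_zero _)
    have hM : ((a.toNat.factorial * b.toNat.factorial * c.toNat.factorial *
          (d.toNat + 1).factorial : ℕ) : ℂ) = ((d.toNat + 1 : ℕ) : ℂ) *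
        ((a.toNat.factorial * b.toNat.factorial * c.toNat.factorial *
          d.toNat.factorial : ℕ) : ℂ) := by
      rw [Nat.factorial_succ]; push_cast; ring
    have key : ((d.toNat + 1 : ℕ) : ℂ) *
        (((a.toNat.factorial * b.toNat.factorial * c.toNat.factorial *
          (d.toNat + 1).factorial : ℕ) : ℂ))⁻¹ =
        (((a.toNat.factorial * b.toNat.factorial * c.toNat.factorial *
          d.toNat.factorial : ℕ) : ℂ))⁻¹ := by
      rw [hM, mul_inv, ← mul_assoc, mul_inv_cancel₀ hk, one_mul]
    conv_rhs => rw [← mul_assoc, ← C_mul, key]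
    rw [pow_succ]
    ring
  · rw [if_neg h]
    by_cases h' : 0 ≤ a ∧ 0 ≤ b ∧ 0 ≤ c ∧ 0 ≤ d + 1
    · rw [if_pos h']
      have : d + 1 = 0 := by omega
      rw [this]
      simp
    · rw [if_neg h']; simp

noncomputable def Rg (γ : Fin 4 → ℤ) : Finset ℤ :=
  Finset.Icc (max (-γ 0) (-γ 3)) (min (γ 1) (γ 2))

lemma gamma_eq (γ : Fin 4 → ℤ) :
    GammaSeries γ = ∑ n ∈ Rg γ, g4 (γ 0 + n) (γ 1 - n) (γ 2 - n) (γ 3 + n) := by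
  unfold GammaSeries Rg
  apply Finset.sum_congr rfl
  intro n hn
  simp only [Finset.mem_Icc] at hn
  unfold g4
  rw [if_pos (by omega)]

noncomputable def Theta (γ : Fin 4 → ℤ) : MvPolynomial (Fin 4) ℂ :=
  ∑ n ∈ Rg γ, C ((n : ℤ) : ℂ) * g4 (γ 0 + n) (γ 1 - n) (γ 2 - n) (γ 3 + n)

lemma sum_gterm_eq (δ : Fin 4 → ℤ) (f : ℤ → ℤ) (s t : Finset ℤ) (hst : s ⊆ t)
    (hz : ∀ n ∈ t, n ∉ s → f n = 0 ∨
      ¬(0 ≤ δ 0 + n ∧ 0 ≤ δ 1 - n ∧ 0 ≤ δ 2 - n ∧ 0 ≤ δ 3 + n)) :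
    ∑ n ∈ s, C ((f n : ℤ) : ℂ) * g4 (δ 0 + n) (δ 1 - n) (δ 2 - n) (δ 3 + n)
      = ∑ n ∈ t, C ((f n : ℤ) : ℂ) * g4 (δ 0 + n) (δ 1 - n) (δ 2 - n) (δ 3 + n) := by
  apply Finset.sum_subset hst
  intro n hnt hns
  rcases hz n hnt hns with h | h
  · rw [h]; simp
  · unfold g4; rw [if_neg h, mul_zero]

lemma Z0 (γ δ : Fin 4 → ℤ) (h0 : δ 0 = γ 0 + 1) (h1 : δ 1 = γ 1)
    (h2 : δ 2 = γ 2) (h3 : δ 3 = γ 3) :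
    X 0 * GammaSeries γ = C ((δ 0 : ℤ) : ℂ) * GammaSeries δ + Theta δ := by
  have L : X 0 * GammaSeries γ =
      ∑ n ∈ Rg γ, C ((δ 0 + n : ℤ) : ℂ) * g4 (δ 0 + n) (δ 1 - n) (δ 2 - n) (δ 3 + n) := by
    rw [gamma_eq, Finset.mul_sum]
    apply Finset.sum_congr rfl
    intro n _
    simp only [h0, h1, h2, h3]
    rw [show γ 0 + 1 + n = γ 0 + n + 1 by ring]
    exact X0_g4 _ _ _ _
  have Rr : C ((δ 0 : ℤ) : ℂ) * GammaSeries δ + Theta δ =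
      ∑ n ∈ Rg δ, C ((δ 0 + n : ℤ) : ℂ) * g4 (δ 0 + n) (δ 1 - n) (δ 2 - n) (δ 3 + n) := by
    rw [gamma_eq, Finset.mul_sum]
    unfold Theta
    rw [← Finset.sum_add_distrib]
    apply Finset.sum_congr rfl
    intro n _
    rw [Int.cast_add, C_add]
    ring
  rw [L, Rr]
  exact sum_gterm_eq δ (fun n => δ 0 + n) _ _
    (by intro n hn; unfold Rg at *; simp only [Finset.mem_Icc] at *; omega)
    (by intro n hnt hns; left; unfold Rg at *; simp only [Finset.mem_Icc] at *; omega)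

lemma Z3 (γ δ : Fin 4 → ℤ) (h0 : δ 0 = γ 0) (h1 : δ 1 = γ 1)
    (h2 : δ 2 = γ 2) (h3 : δ 3 = γ 3 + 1) :
    X 3 * GammaSeries γ = C ((δ 3 : ℤ) : ℂ) * GammaSeries δ + Theta δ := by
  have L : X 3 * GammaSeries γ =
      ∑ n ∈ Rg γ, C ((δ 3 + n : ℤ) : ℂ) * g4 (δ 0 + n) (δ 1 - n) (δ 2 - n) (δ 3 + n) := by
    rw [gamma_eq, Finset.mul_sum]
    apply Finset.sum_congr rfl
    intro n _
    simp only [h0, h1, h2, h3]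
    rw [show γ 3 + 1 + n = γ 3 + n + 1 by ring]
    exact X3_g4 _ _ _ _
  have Rr : C ((δ 3 : ℤ) : ℂ) * GammaSeries δ + Theta δ =
      ∑ n ∈ Rg δ, C ((δ 3 + n : ℤ) : ℂ) * g4 (δ 0 + n) (δ 1 - n) (δ 2 - n) (δ 3 + n) := by
    rw [gamma_eq, Finset.mul_sum]
    unfold Theta
    rw [← Finset.sum_add_distrib]
    apply Finset.sum_congr rfl
    intro n _
    rw [Int.cast_add, C_add]
    ring
  rw [L, Rr]
  exact sum_gterm_eq δ (fun n => δ 3 + n) _ _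
    (by intro n hn; unfold Rg at *; simp only [Finset.mem_Icc] at *; omega)
    (by intro n hnt hns; left; unfold Rg at *; simp only [Finset.mem_Icc] at *; omega)

lemma Z1 (γ δ : Fin 4 → ℤ) (h0 : δ 0 = γ 0) (h1 : δ 1 = γ 1 + 1)
    (h2 : δ 2 = γ 2) (h3 : δ 3 = γ 3) :
    X 1 * GammaSeries γ = C ((δ 1 : ℤ) : ℂ) * GammaSeries δ - Theta δ := by
  have L : X 1 * GammaSeries γ =
      ∑ n ∈ Rg γ, C ((δ 1 - n : ℤ) : ℂ) * g4 (δ 0 + n) (δ 1 - n) (δ 2 - n) (δ 3 + n) := by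
    rw [gamma_eq, Finset.mul_sum]
    apply Finset.sum_congr rfl
    intro n _
    simp only [h0, h1, h2, h3]
    rw [show γ 1 + 1 - n = γ 1 - n + 1 by ring]
    exact X1_g4 _ _ _ _
  have Rr : C ((δ 1 : ℤ) : ℂ) * GammaSeries δ - Theta δ =
      ∑ n ∈ Rg δ, C ((δ 1 - n : ℤ) : ℂ) * g4 (δ 0 + n) (δ 1 - n) (δ 2 - n) (δ 3 + n) := by
    rw [gamma_eq, Finset.mul_sum]
    unfold Theta
    rw [← Finset.sum_sub_distrib]
    apply Finset.sum_congr rfl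
    intro n _
    rw [Int.cast_sub, C_sub]
    ring
  rw [L, Rr]
  exact sum_gterm_eq δ (fun n => δ 1 - n) _ _
    (by intro n hn; unfold Rg at *; simp only [Finset.mem_Icc] at *; omega)
    (by intro n hnt hns; left; unfold Rg at *; simp only [Finset.mem_Icc] at *; omega)

lemma Z2 (γ δ : Fin 4 → ℤ) (h0 : δ 0 = γ 0) (h1 : δ 1 = γ 1)
    (h2 : δ 2 = γ 2 + 1) (h3 : δ 3 = γ 3) :
    X 2 * GammaSeries γ = C ((δ 2 : ℤ) : ℂ) * GammaSeries δ - Theta δ := by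
  have L : X 2 * GammaSeries γ =
      ∑ n ∈ Rg γ, C ((δ 2 - n : ℤ) : ℂ) * g4 (δ 0 + n) (δ 1 - n) (δ 2 - n) (δ 3 + n) := by
    rw [gamma_eq, Finset.mul_sum]
    apply Finset.sum_congr rfl
    intro n _
    simp only [h0, h1, h2, h3]
    rw [show γ 2 + 1 - n = γ 2 - n + 1 by ring]
    exact X2_g4 _ _ _ _
  have Rr : C ((δ 2 : ℤ) : ℂ) * GammaSeries δ - Theta δ =
      ∑ n ∈ Rg δ, C ((δ 2 - n : ℤ) : ℂ) * g4 (δ 0 + n) (δ 1 - n) (δ 2 - n) (δ 3 + n) := by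
    rw [gamma_eq, Finset.mul_sum]
    unfold Theta
    rw [← Finset.sum_sub_distrib]
    apply Finset.sum_congr rfl
    intro n _
    rw [Int.cast_sub, C_sub]
    ring
  rw [L, Rr]
  exact sum_gterm_eq δ (fun n => δ 2 - n) _ _
    (by intro n hn; unfold Rg at *; simp only [Finset.mem_Icc] at *; omega)
    (by intro n hnt hns; left; unfold Rg at *; simp only [Finset.mem_Icc] at *; omega)

lemma sum_shift (lo hi : ℤ) (F : ℤ → MvPolynomial (Fin 4) ℂ) :
    ∑ n ∈ Finset.Icc lo hi, F (n + 1) = ∑ n ∈ Finset.Icc (lo + 1) (hi + 1), F n := by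
  rw [← Finset.map_add_right_Icc, Finset.sum_map]
  simp [addRightEmbedding]

lemma QA (δ ε : Fin 4 → ℤ) (h0 : ε 0 = δ 0) (h1 : ε 1 = δ 1 - 1)
    (h2 : ε 2 = δ 2 - 1) (h3 : ε 3 = δ 3) :
    (X 1 * X 2 - X 0 * X 3) * GammaSeries ε
      = C ((δ 1 * δ 2 - δ 0 * δ 3 : ℤ) : ℂ) * GammaSeries δ
        - C ((δ 0 + δ 1 + δ 2 + δ 3 : ℤ) : ℂ) * Theta δ := by
  have L1 : (X 1 * X 2) * GammaSeries ε =
      ∑ n ∈ Rg δ, C (((δ 1 - n) * (δ 2 - n) : ℤ) : ℂ) *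
        g4 (δ 0 + n) (δ 1 - n) (δ 2 - n) (δ 3 + n) := by
    rw [gamma_eq, Finset.mul_sum]
    have e1 : ∀ n ∈ Rg ε, (X 1 * X 2) * g4 (ε 0 + n) (ε 1 - n) (ε 2 - n) (ε 3 + n)
        = C (((δ 1 - n) * (δ 2 - n) : ℤ) : ℂ) *
          g4 (δ 0 + n) (δ 1 - n) (δ 2 - n) (δ 3 + n) := by
      intro n _
      simp only [h0, h1, h2, h3]
      rw [show δ 1 - n = (δ 1 - 1 - n) + 1 by ring,
        show δ 2 - n = (δ 2 - 1 - n) + 1 by ring]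
      rw [mul_assoc, X2_g4, mul_left_comm, X1_g4, Int.cast_mul, C_mul]
      ring
    rw [Finset.sum_congr rfl e1]
    apply sum_gterm_eq δ (fun n => (δ 1 - n) * (δ 2 - n))
    · intro n hn; unfold Rg at *; simp only [Finset.mem_Icc] at *; omega
    · intro n hnt hns
      left
      have h : δ 1 - n = 0 ∨ δ 2 - n = 0 := by
        unfold Rg at *; simp only [Finset.mem_Icc] at *; omega
      rcases h with h | h <;> rw [h] <;> ring
  have L2 : (X 0 * X 3) * GammaSeries ε =
      ∑ n ∈ Rg δ, C (((δ 0 + n) * (δ 3 + n) : ℤ) : ℂ) *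
        g4 (δ 0 + n) (δ 1 - n) (δ 2 - n) (δ 3 + n) := by
    rw [gamma_eq, Finset.mul_sum]
    have e1 : ∀ n ∈ Rg ε, (X 0 * X 3) * g4 (ε 0 + n) (ε 1 - n) (ε 2 - n) (ε 3 + n)
        = C (((δ 0 + (n + 1)) * (δ 3 + (n + 1)) : ℤ) : ℂ) *
          g4 (δ 0 + (n + 1)) (δ 1 - (n + 1)) (δ 2 - (n + 1)) (δ 3 + (n + 1)) := by
      intro n _
      simp only [h0, h1, h2, h3]
      rw [show δ 0 + (n + 1) = (δ 0 + n) + 1 by ring,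
        show δ 3 + (n + 1) = (δ 3 + n) + 1 by ring,
        show δ 1 - 1 - n = δ 1 - (n + 1) by ring,
        show δ 2 - 1 - n = δ 2 - (n + 1) by ring]
      rw [mul_assoc, X3_g4, mul_left_comm, X0_g4, Int.cast_mul, C_mul]
      ring
    rw [Finset.sum_congr rfl e1]
    have hR : Rg ε = Finset.Icc (max (-δ 0) (-δ 3)) (min (δ 1) (δ 2) - 1) := by
      unfold Rg; rw [h0, h1, h2, h3]; congr 1 <;> omega
    rw [hR]
    have hsh := sum_shift (-δ 0 ⊔ -δ 3) (δ 1 ⊓ δ 2 - 1)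
      (fun m => C (((δ 0 + m) * (δ 3 + m) : ℤ) : ℂ) *
        g4 (δ 0 + m) (δ 1 - m) (δ 2 - m) (δ 3 + m))
    rw [hsh]
    rw [show δ 1 ⊓ δ 2 - 1 + 1 = min (δ 1) (δ 2) by ring]
    apply sum_gterm_eq δ (fun n => (δ 0 + n) * (δ 3 + n))
    · intro n hn; unfold Rg at *; simp only [Finset.mem_Icc] at *; omega
    · intro n hnt hns
      left
      have h : δ 0 + n = 0 ∨ δ 3 + n = 0 := by
        unfold Rg at *; simp only [Finset.mem_Icc] at *; omega
      rcases h with h | h <;> rw [h] <;> ring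
  rw [sub_mul, L1, L2, ← Finset.sum_sub_distrib]
  rw [gamma_eq, Finset.mul_sum]
  unfold Theta
  rw [Finset.mul_sum, ← Finset.sum_sub_distrib]
  apply Finset.sum_congr rfl
  intro n _
  have key : (((δ 1 - n) * (δ 2 - n) : ℤ) : ℂ) - (((δ 0 + n) * (δ 3 + n) : ℤ) : ℂ)
      = ((δ 1 * δ 2 - δ 0 * δ 3 : ℤ) : ℂ)
        - ((δ 0 + δ 1 + δ 2 + δ 3 : ℤ) : ℂ) * ((n : ℤ) : ℂ) := by
    push_cast; ring
  rw [← sub_mul, ← C_sub, key, C_sub, C_mul]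
  ring

lemma theta_zero (δ : Fin 4 → ℤ) (h : δ 0 + δ 1 + δ 2 + δ 3 = 0) :
    Theta δ = C ((-δ 0 : ℤ) : ℂ) * GammaSeries δ := by
  rw [gamma_eq, Finset.mul_sum]
  unfold Theta
  apply Finset.sum_congr rfl
  intro n hn
  have hn' : n = -δ 0 := by
    unfold Rg at hn; simp only [Finset.mem_Icc] at hn; omega
  rw [hn']

def SpanSet : Set (MvPolynomial (Fin 4) ℂ) :=
  { p : MvPolynomial (Fin 4) ℂ |
    ∃ (k : ℕ) (δ : Fin 4 → ℤ),
      p = (X 1 * X 2 - X 0 * X 3) ^ k * GammaSeries δ }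

lemma gamma_mem (δ : Fin 4 → ℤ) : GammaSeries δ ∈ Submodule.span ℂ SpanSet :=
  Submodule.subset_span ⟨0, δ, by rw [pow_zero, one_mul]⟩

lemma Qpow_mul_mem (k : ℕ) (p : MvPolynomial (Fin 4) ℂ)
    (hp : p ∈ Submodule.span ℂ SpanSet) :
    (X 1 * X 2 - X 0 * X 3) ^ k * p ∈ Submodule.span ℂ SpanSet := by
  induction hp using Submodule.span_induction with
  | mem q hq =>
    obtain ⟨j, δ, rfl⟩ := hq
    rw [← mul_assoc, ← pow_add]
    exact Submodule.subset_span ⟨k + j, δ, rfl⟩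
  | zero => rw [mul_zero]; exact Submodule.zero_mem _
  | add q r _ _ hq hr => rw [mul_add]; exact Submodule.add_mem _ hq hr
  | smul a q _ hq => rw [mul_smul_comm]; exact Submodule.smul_mem _ a hq

lemma theta_mem (δ : Fin 4 → ℤ) : Theta δ ∈ Submodule.span ℂ SpanSet := by
  by_cases hs : δ 0 + δ 1 + δ 2 + δ 3 = 0
  · rw [theta_zero δ hs, C_mul']
    exact Submodule.smul_mem _ _ (gamma_mem δ)
  · set ε : Fin 4 → ℤ := fun j => if j = 1 then δ 1 - 1 else if j = 2 then δ 2 - 1 else δ j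
      with hε
    have hQ := QA δ ε (by simp [hε]) (by simp [hε]) (by simp [hε]) (by simp [hε])
    have hB : ((δ 0 + δ 1 + δ 2 + δ 3 : ℤ) : ℂ) ≠ 0 := by
      exact_mod_cast hs
    have hT : Theta δ = ((δ 0 + δ 1 + δ 2 + δ 3 : ℤ) : ℂ)⁻¹ •
        (C ((δ 1 * δ 2 - δ 0 * δ 3 : ℤ) : ℂ) * GammaSeries δ
          - (X 1 * X 2 - X 0 * X 3) * GammaSeries ε) := by
      rw [hQ]
      rw [sub_sub_cancel, C_mul', smul_smul, inv_mul_cancel₀ hB, one_smul]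
    rw [hT]
    apply Submodule.smul_mem
    apply Submodule.sub_mem
    · rw [C_mul']; exact Submodule.smul_mem _ _ (gamma_mem δ)
    · exact Submodule.subset_span ⟨1, ε, by rw [pow_one]⟩

lemma Xi_mul_gamma_mem (i : Fin 4) (γ : Fin 4 → ℤ) :
    X i * GammaSeries γ ∈ Submodule.span ℂ SpanSet := by
  fin_cases i
  · show X 0 * GammaSeries γ ∈ _
    set δ : Fin 4 → ℤ := fun j => if j = 0 then γ 0 + 1 else γ j with hδ
    rw [Z0 γ δ (by simp [hδ]) (by simp [hδ]) (by simp [hδ]) (by simp [hδ])]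
    exact Submodule.add_mem _
      (by rw [C_mul']; exact Submodule.smul_mem _ _ (gamma_mem δ)) (theta_mem δ)
  · show X 1 * GammaSeries γ ∈ _
    set δ : Fin 4 → ℤ := fun j => if j = 1 then γ 1 + 1 else γ j with hδ
    rw [Z1 γ δ (by simp [hδ]) (by simp [hδ]) (by simp [hδ]) (by simp [hδ])]
    exact Submodule.sub_mem _
      (by rw [C_mul']; exact Submodule.smul_mem _ _ (gamma_mem δ)) (theta_mem δ)
  · show X 2 * GammaSeries γ ∈ _
    set δ : Fin 4 → ℤ := fun j => if j = 2 then γ 2 + 1 else γ j with hδ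
    rw [Z2 γ δ (by simp [hδ]) (by simp [hδ]) (by simp [hδ]) (by simp [hδ])]
    exact Submodule.sub_mem _
      (by rw [C_mul']; exact Submodule.smul_mem _ _ (gamma_mem δ)) (theta_mem δ)
  · show X 3 * GammaSeries γ ∈ _
    set δ : Fin 4 → ℤ := fun j => if j = 3 then γ 3 + 1 else γ j with hδ
    rw [Z3 γ δ (by simp [hδ]) (by simp [hδ]) (by simp [hδ]) (by simp [hδ])]
    exact Submodule.add_mem _
      (by rw [C_mul']; exact Submodule.smul_mem _ _ (gamma_mem δ)) (theta_mem δ)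

lemma X_mul_mem (i : Fin 4) (p : MvPolynomial (Fin 4) ℂ)
    (hp : p ∈ Submodule.span ℂ SpanSet) :
    X i * p ∈ Submodule.span ℂ SpanSet := by
  induction hp using Submodule.span_induction with
  | mem q hq =>
    obtain ⟨j, δ, rfl⟩ := hq
    rw [mul_left_comm]
    exact Qpow_mul_mem j _ (Xi_mul_gamma_mem i δ)
  | zero => rw [mul_zero]; exact Submodule.zero_mem _
  | add q r _ _ hq hr => rw [mul_add]; exact Submodule.add_mem _ hq hr
  | smul a q _ hq => rw [mul_smul_comm]; exact Submodule.smul_mem _ a hq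

lemma Xpow_mul_mem (i : Fin 4) (u : ℕ) (p : MvPolynomial (Fin 4) ℂ)
    (hp : p ∈ Submodule.span ℂ SpanSet) :
    X i ^ u * p ∈ Submodule.span ℂ SpanSet := by
  induction u with
  | zero => rw [pow_zero, one_mul]; exact hp
  | succ m ih =>
    rw [pow_succ, mul_comm (X i ^ m) (X i), mul_assoc]
    exact X_mul_mem i _ ih

/-- Every monomial multiple of a Γ-series lies in the span of the
`(z₂z₃ − z₁z₄)^p F_δ`. -/
theorem monomial_mul_gammaSeries_mem_span (u v w t : ℕ) (γ : Fin 4 → ℤ) :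
    X 0 ^ u * X 1 ^ v * X 2 ^ w * X 3 ^ t * GammaSeries γ ∈
      Submodule.span ℂ { p : MvPolynomial (Fin 4) ℂ |
        ∃ (k : ℕ) (δ : Fin 4 → ℤ),
          p = (X 1 * X 2 - X 0 * X 3) ^ k * GammaSeries δ } := by
  have : X 0 ^ u * X 1 ^ v * X 2 ^ w * X 3 ^ t * GammaSeries γ
      = X 0 ^ u * (X 1 ^ v * (X 2 ^ w * (X 3 ^ t * GammaSeries γ))) := by ring
  rw [this]
  exact Xpow_mul_mem 0 u _ (Xpow_mul_mem 1 v _ (Xpow_mul_mem 2 w _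
    (Xpow_mul_mem 3 t _ (gamma_mem γ))))
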